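/- arXiv:1805.03335 — 4 statements merged into one kernel-verified Lean document; each statement's English description precedes it below -/
import Mathlib

section
/- For every k ≥ 1 and every n with 6k−4 ≤ n ≤ 6k, the perfect domination number of the n×2 knights graph equals 4k. -/
def knightAdj (p q : ℤ × ℤ) : Prop :=
  (|p.1 - q.1| = 1 ∧ |p.2 - q.2| = 2) ∨ (|p.1 - q.1| = 2 ∧ |p.2 - q.2| = 1)

lemma knightAdj_symm {p q : ℤ × ℤ} (h : knightAdj p q) : knightAdj q p := by
  unfold knightAdj at *
  rcases h with ⟨h1, h2⟩ | ⟨h1, h2⟩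
  · left; rw [abs_sub_comm, abs_sub_comm q.2]; exact ⟨h1, h2⟩
  · right; rw [abs_sub_comm, abs_sub_comm q.2]; exact ⟨h1, h2⟩

lemma knightAdj_irrefl (p : ℤ × ℤ) : ¬ knightAdj p p := by
  unfold knightAdj; simp

/-- The knights graph on an `n`-column, `m`-row chessboard. -/
def KN (n m : ℕ) : SimpleGraph (Fin n × Fin m) where
  Adj p q := knightAdj ((p.1 : ℤ), (p.2 : ℤ)) ((q.1 : ℤ), (q.2 : ℤ))
  symm := ⟨fun _ _ h => knightAdj_symm h⟩
  loopless := ⟨fun p => knightAdj_irrefl _⟩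

/-- The infinite knights graph on `ℤ × ℤ`. -/
def KNZZ : SimpleGraph (ℤ × ℤ) where
  Adj := knightAdj
  symm := ⟨fun _ _ h => knightAdj_symm h⟩
  loopless := ⟨knightAdj_irrefl⟩

/-- The quarter-infinite knights graph on `ℕ × ℕ`. -/
def KNNN : SimpleGraph (ℕ × ℕ) where
  Adj p q := knightAdj ((p.1 : ℤ), (p.2 : ℤ)) ((q.1 : ℤ), (q.2 : ℤ))
  symm := ⟨fun _ _ h => knightAdj_symm h⟩
  loopless := ⟨fun p => knightAdj_irrefl _⟩

/-- The half-plane knights graph on `ℤ × ℕ`. -/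
def KNZN : SimpleGraph (ℤ × ℕ) where
  Adj p q := knightAdj (p.1, (p.2 : ℤ)) (q.1, (q.2 : ℤ))
  symm := ⟨fun _ _ h => knightAdj_symm h⟩
  loopless := ⟨fun p => knightAdj_irrefl _⟩

/-- `S` is a perfect dominating set of `G`: every vertex not in `S` is adjacent to
exactly one vertex of `S`. -/
def IsPerfDomSet {V : Type*} (G : SimpleGraph V) (S : Set V) : Prop :=
  ∀ v ∉ S, ∃! u, u ∈ S ∧ G.Adj v u

/-- The perfect domination number of `G`. -/
noncomputable def perfDomNum {V : Type*} (G : SimpleGraph V) : ℕ :=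
  sInf {k | ∃ S : Set V, IsPerfDomSet G S ∧ S.ncard = k}

lemma adj_iff {n : ℕ} (p q : Fin n × Fin 2) :
    (KN n 2).Adj p q ↔
      ((p.1 : ℕ) + 2 = (q.1 : ℕ) ∨ (q.1 : ℕ) + 2 = (p.1 : ℕ)) ∧ (p.2 : ℕ) ≠ (q.2 : ℕ) := by
  have h2 : (p.2 : ℕ) < 2 := p.2.isLt
  have h2' : (q.2 : ℕ) < 2 := q.2.isLt
  show knightAdj _ _ ↔ _
  unfold knightAdj
  simp only [abs_eq (by norm_num : (0:ℤ) ≤ 1), abs_eq (by norm_num : (0:ℤ) ≤ 2)]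
  push_cast
  constructor
  · rintro (⟨h, h'⟩ | ⟨h, h'⟩) <;> omega
  · rintro ⟨h, h'⟩
    right
    omega

def chosen (j m : ℕ) : Prop :=
  if m % 3 = 1 then (j % 3 = 1 ∧ j + 2 < m) ∨ j = m - 2 else j % 3 = 1

instance : ∀ j m, Decidable (chosen j m) := fun j m => by unfold chosen; infer_instance

lemma chosen_exactly_one {j m : ℕ} (hj : j < m) (hnc : ¬ chosen j m) :
    ((1 ≤ j ∧ chosen (j-1) m) ∧ ¬(j+1 < m ∧ chosen (j+1) m)) ∨
    (¬(1 ≤ j ∧ chosen (j-1) m) ∧ (j+1 < m ∧ chosen (j+1) m)) := by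
  unfold chosen at *
  split_ifs at * <;> omega

lemma count_mod3 (m : ℕ) : ((Finset.range m).filter (fun j => j % 3 = 1)).card = (m+1)/3 := by
  induction m with
  | zero => simp
  | succ m ih =>
    rw [Finset.range_add_one, Finset.filter_insert]
    split_ifs with h
    · rw [Finset.card_insert_of_notMem (by simp)]
      omega
    · omega

lemma count_chosen (m : ℕ) :
    ((Finset.range m).filter (fun j => chosen j m)).card = (m+2)/3 := by
  rcases Nat.lt_or_ge m 2 with hm | hm
  · interval_cases m <;> decide
  by_cases h1 : m % 3 = 1
  · have hm4 : 4 ≤ m := by omega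
    have heq : (Finset.range m).filter (fun j => chosen j m)
        = insert (m-2) ((Finset.range (m-2)).filter (fun j => j % 3 = 1)) := by
      ext j
      simp only [Finset.mem_filter, Finset.mem_range, Finset.mem_insert, chosen, if_pos h1]
      omega
    rw [heq, Finset.card_insert_of_notMem (by simp only [Finset.mem_filter, Finset.mem_range]; omega), count_mod3]
    omega
  · have heq : (Finset.range m).filter (fun j => chosen j m)
        = (Finset.range m).filter (fun j => j % 3 = 1) := by
      ext j
      simp only [Finset.mem_filter, Finset.mem_range, chosen, if_neg h1]
    rw [heq, count_mod3]
    omega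

lemma count_even (n : ℕ) : ((Finset.range n).filter (fun a => a % 2 = 0)).card = (n+1)/2 := by
  induction n with
  | zero => simp
  | succ n ih =>
    rw [Finset.range_add_one, Finset.filter_insert]
    split_ifs with h
    · rw [Finset.card_insert_of_notMem (by simp)]; omega
    · omega

lemma count_odd (n : ℕ) : ((Finset.range n).filter (fun a => a % 2 = 1)).card = n/2 := by
  induction n with
  | zero => simp
  | succ n ih =>
    rw [Finset.range_add_one, Finset.filter_insert]
    split_ifs with h
    · rw [Finset.card_insert_of_notMem (by simp)]; omega
    · omega

def mcol (n r : ℕ) : ℕ := if r = 0 then (n+1)/2 else n/2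

def colChosen (n a : ℕ) : Prop := chosen (a/2) (mcol n (a % 2))

instance : ∀ n a, Decidable (colChosen n a) := fun n a => by unfold colChosen; infer_instance

def domSet (n : ℕ) : Finset (Fin n × Fin 2) :=
  Finset.univ.filter (fun v => colChosen n (v.1 : ℕ))

lemma mcol_lt {n a : ℕ} (h : a < n) : a / 2 < mcol n (a % 2) := by
  unfold mcol; split_ifs <;> omega

lemma colChosen_congr {n a : ℕ} {j : ℕ} (h2 : a % 2 = (2*j + (a % 2)) % 2)
    (hj : a / 2 = j) : True := trivial

lemma domSet_perf (n : ℕ) : IsPerfDomSet (KN n 2) ↑(domSet n) := by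
  rintro ⟨⟨a, han⟩, b⟩ hv
  have hv' : ¬ colChosen n a := by
    simpa [domSet] using hv
  have hb2 : (b : ℕ) < 2 := b.isLt
  have key := chosen_exactly_one (mcol_lt han) hv'
  have hleft : 2 ≤ a → (colChosen n (a - 2) ↔ chosen (a/2 - 1) (mcol n (a % 2))) := by
    intro h
    unfold colChosen
    have e1 : (a-2) % 2 = a % 2 := by omega
    have e2 : (a-2) / 2 = a/2 - 1 := by omega
    rw [e1, e2]
  have hright : a + 2 < n → (colChosen n (a + 2) ↔ chosen (a/2 + 1) (mcol n (a % 2))) := by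
    intro h
    unfold colChosen
    have e1 : (a+2) % 2 = a % 2 := by omega
    have e2 : (a+2) / 2 = a/2 + 1 := by omega
    rw [e1, e2]
  have hcols : a + 2 < n ↔ a/2 + 1 < mcol n (a % 2) := by
    unfold mcol; split_ifs <;> omega
  rcases key with ⟨⟨hj1, hc⟩, hnr⟩ | ⟨hnl, ⟨hj1, hc⟩⟩
  · -- left neighbor is the dominator
    have h2a : 2 ≤ a := by omega
    refine ⟨(⟨a - 2, by omega⟩, ⟨1 - (b : ℕ), by omega⟩), ⟨?_, ?_⟩, ?_⟩
    · simp only [domSet, Finset.coe_filter, Set.mem_setOf_eq, Finset.mem_univ, true_and]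
      exact (hleft h2a).2 hc
    · rw [adj_iff]
      refine ⟨Or.inr ?_, ?_⟩ <;> simp <;> omega
    · rintro ⟨⟨c, hcn⟩, d⟩ ⟨hy1, hy2⟩
      have hy1' : colChosen n c := by simpa [domSet] using hy1
      rw [adj_iff] at hy2
      simp only at hy2
      obtain ⟨hcol, hrow⟩ := hy2
      have hd2 : (d : ℕ) < 2 := d.isLt
      have hca : c = a - 2 := by
        rcases hcol with h | h
        · exfalso
          have hlt : a + 2 < n := by omega
          have hc2 : colChosen n (a + 2) := by
            have : c = a + 2 := by omega
            rwa [this] at hy1'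
          exact hnr ⟨hcols.1 hlt, (hright hlt).1 hc2⟩
        · omega
      refine Prod.ext (Fin.ext (by simpa using hca)) (Fin.ext (by simp; omega))
  · -- right neighbor is the dominator
    have hran : a + 2 < n := hcols.2 hj1
    refine ⟨(⟨a + 2, hran⟩, ⟨1 - (b : ℕ), by omega⟩), ⟨?_, ?_⟩, ?_⟩
    · simp only [domSet, Finset.coe_filter, Set.mem_setOf_eq, Finset.mem_univ, true_and]
      exact (hright hran).2 hc
    · rw [adj_iff]
      refine ⟨Or.inl ?_, ?_⟩ <;> simp <;> omega
    · rintro ⟨⟨c, hcn⟩, d⟩ ⟨hy1, hy2⟩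
      have hy1' : colChosen n c := by simpa [domSet] using hy1
      rw [adj_iff] at hy2
      simp only at hy2
      obtain ⟨hcol, hrow⟩ := hy2
      have hd2 : (d : ℕ) < 2 := d.isLt
      have hca : c = a + 2 := by
        rcases hcol with h | h
        · omega
        · exfalso
          have h2a : 2 ≤ a := by omega
          have hc2 : colChosen n (a - 2) := by
            have : c = a - 2 := by omega
            rwa [this] at hy1'
          exact hnl ⟨by omega, (hleft h2a).1 hc2⟩
      refine Prod.ext (Fin.ext (by simpa using hca)) (Fin.ext (by simp; omega))

lemma card_filter_fin (n : ℕ) (P : ℕ → Prop) [DecidablePred P] :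
    (Finset.univ.filter (fun a : Fin n => P (a : ℕ))).card = ((Finset.range n).filter P).card := by
  have himg : (Finset.range n).filter P
      = (Finset.univ.filter (fun a : Fin n => P (a : ℕ))).image Fin.val := by
    ext b
    simp only [Finset.mem_filter, Finset.mem_range, Finset.mem_image, Finset.mem_univ, true_and]
    constructor
    · rintro ⟨hb, hP⟩
      exact ⟨⟨b, hb⟩, hP, rfl⟩
    · rintro ⟨a, hP, rfl⟩
      exact ⟨a.isLt, hP⟩
  rw [himg, Finset.card_image_of_injective _ Fin.val_injective]

lemma count_colChosen (n : ℕ) :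
    ((Finset.range n).filter (colChosen n)).card = ((n+1)/2+2)/3 + (n/2+2)/3 := by
  have hsplit : (Finset.range n).filter (colChosen n)
      = ((Finset.range ((n+1)/2)).filter (fun j => chosen j ((n+1)/2))).image (fun j => 2*j)
        ∪ ((Finset.range (n/2)).filter (fun j => chosen j (n/2))).image (fun j => 2*j+1) := by
    ext a
    simp only [Finset.mem_filter, Finset.mem_range, Finset.mem_union, Finset.mem_image]
    constructor
    · rintro ⟨han, hc⟩
      unfold colChosen mcol at hc
      rcases Nat.mod_two_eq_zero_or_one a with he | ho
      · left
        refine ⟨a/2, ⟨by omega, ?_⟩, by omega⟩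
        rwa [he, if_pos rfl] at hc
      · right
        refine ⟨a/2, ⟨by omega, ?_⟩, by omega⟩
        rwa [ho, if_neg (by omega)] at hc
    · rintro (⟨j, ⟨hj, hc⟩, rfl⟩ | ⟨j, ⟨hj, hc⟩, rfl⟩)
      · refine ⟨by omega, ?_⟩
        unfold colChosen mcol
        have e1 : (2*j) % 2 = 0 := by omega
        have e2 : (2*j) / 2 = j := by omega
        rw [e1, e2, if_pos rfl]
        exact hc
      · refine ⟨by omega, ?_⟩
        unfold colChosen mcol
        have e1 : (2*j+1) % 2 = 1 := by omega
        have e2 : (2*j+1) / 2 = j := by omega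
        rw [e1, e2, if_neg (by omega)]
        exact hc
  rw [hsplit, Finset.card_union_of_disjoint, Finset.card_image_of_injective _ (fun x y h => by omega),
      Finset.card_image_of_injective _ (fun x y h => by omega), count_chosen, count_chosen]
  · rw [Finset.disjoint_left]
    rintro x hx hy
    simp only [Finset.mem_image] at hx hy
    obtain ⟨j, _, rfl⟩ := hx
    obtain ⟨i, _, h⟩ := hy
    omega

lemma domSet_card (n : ℕ) :
    (domSet n).card = 2 * (((n+1)/2+2)/3 + (n/2+2)/3) := by
  have heq : domSet n = (Finset.univ.filter (fun a : Fin n => colChosen n (a : ℕ))) ×ˢ (Finset.univ : Finset (Fin 2)) := by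
    ext ⟨x, y⟩
    simp [domSet]
  rw [heq, Finset.card_product, card_filter_fin, count_colChosen]
  simp [Finset.card_univ]
  ring

def cls {n : ℕ} (v : Fin n × Fin 2) : ℕ × ℕ :=
  ((v.1 : ℕ) % 2, ((v.1 : ℕ) / 2 + (v.2 : ℕ)) % 2)

lemma cls_adj {n : ℕ} {v u : Fin n × Fin 2} (h : (KN n 2).Adj v u) : cls v = cls u := by
  rw [adj_iff] at h
  obtain ⟨hc, hr⟩ := h
  have hv2 := v.2.isLt
  have hu2 := u.2.isLt
  unfold cls
  refine Prod.ext ?_ ?_ <;> simp only <;> omega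

lemma card_class (n : ℕ) (r s : ℕ) (hs : s < 2) :
    (Finset.univ.filter (fun v : Fin n × Fin 2 => cls v = (r, s))).card
      = ((Finset.range n).filter (fun a => a % 2 = r)).card := by
  have himg : (Finset.range n).filter (fun a => a % 2 = r)
      = ((Finset.univ.filter (fun v : Fin n × Fin 2 => cls v = (r, s))).image
          (fun v => (v.1 : ℕ))) := by
    ext a
    simp only [Finset.mem_filter, Finset.mem_range, Finset.mem_image, Finset.mem_univ, true_and]
    constructor
    · rintro ⟨ha, har⟩
      refine ⟨(⟨a, ha⟩, ⟨(s + a/2) % 2, by omega⟩), ?_, rfl⟩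
      unfold cls
      simp only
      refine Prod.ext ?_ ?_ <;> simp <;> omega
    · rintro ⟨v, hv, rfl⟩
      unfold cls at hv
      have h1 : (v.1 : ℕ) % 2 = r := congrArg Prod.fst hv
      exact ⟨v.1.isLt, h1⟩
  rw [himg]
  rw [Finset.card_image_of_injOn]
  intro v hv w hw hvw
  simp only [Finset.coe_filter, Set.mem_setOf_eq, Finset.mem_univ, true_and] at hv hw
  unfold cls at hv hw
  have hv2 := v.2.isLt
  have hw2 := w.2.isLt
  have e1 : ((v.1 : ℕ) / 2 + (v.2 : ℕ)) % 2 = s := congrArg Prod.snd hv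
  have e2 : ((w.1 : ℕ) / 2 + (w.2 : ℕ)) % 2 = s := congrArg Prod.snd hw
  have hvw' : (v.1 : ℕ) = (w.1 : ℕ) := hvw
  refine Prod.ext (Fin.ext hvw') (Fin.ext ?_)
  omega

open Classical in
lemma class_lb {n : ℕ} (S : Set (Fin n × Fin 2)) (hS : IsPerfDomSet (KN n 2) S)
    (F : Finset (Fin n × Fin 2)) (hF : ∀ v, v ∈ F ↔ v ∈ S) (r s : ℕ) :
    (Finset.univ.filter (fun v : Fin n × Fin 2 => cls v = (r, s))).card
      ≤ 3 * (F.filter (fun v => cls v = (r, s))).card := by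
  have hS' : ∀ v, v ∉ S → ∃ u, (u ∈ S ∧ (KN n 2).Adj v u) ∧
      ∀ y, (y ∈ S ∧ (KN n 2).Adj v y) → y = u := fun v hv => hS v hv
  choose! f hf using hS'
  set Vi := Finset.univ.filter (fun v : Fin n × Fin 2 => cls v = (r, s)) with hVi
  set Si := F.filter (fun v => cls v = (r, s)) with hSi
  set Di := Vi.filter (fun v => v ∉ S) with hDi
  have h1 : Vi.card ≤ Di.card + Si.card := by
    have hsub : Vi ⊆ Di ∪ Si := by
      intro v hv
      rw [Finset.mem_union]
      by_cases hvS : v ∈ S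
      · right
        rw [hSi, Finset.mem_filter]
        exact ⟨(hF v).2 hvS, (Finset.mem_filter.1 hv).2⟩
      · left
        rw [hDi, Finset.mem_filter]
        exact ⟨hv, hvS⟩
    calc Vi.card ≤ (Di ∪ Si).card := Finset.card_le_card hsub
      _ ≤ Di.card + Si.card := Finset.card_union_le _ _
  have h2 : Di.card ≤ 2 * Si.card := by
    have hinj : ∀ v ∈ Di, ∀ w ∈ Di,
        (fun v => (f v, decide ((v.1 : ℕ) < ((f v).1 : ℕ)))) v
          = (fun v => (f v, decide ((v.1 : ℕ) < ((f v).1 : ℕ)))) w → v = w := by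
      intro v hv w hw hvw
      simp only [Prod.mk.injEq, decide_eq_decide] at hvw
      obtain ⟨hfeq, hlt⟩ := hvw
      have hvS : v ∉ S := (Finset.mem_filter.1 hv).2
      have hwS : w ∉ S := (Finset.mem_filter.1 hw).2
      obtain ⟨⟨_, hadjv⟩, _⟩ := hf v hvS
      obtain ⟨⟨_, hadjw⟩, _⟩ := hf w hwS
      rw [adj_iff] at hadjv hadjw
      rw [hfeq] at hadjv hlt
      have hv2 := v.2.isLt
      have hw2 := w.2.isLt
      have hu2 := (f w).2.isLt
      refine Prod.ext (Fin.ext ?_) (Fin.ext ?_)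
      · rcases hadjv.1 with h | h <;> rcases hadjw.1 with h' | h' <;> omega
      · have := hadjv.2
        have := hadjw.2
        omega
    have hmaps : ∀ v ∈ Di,
        (fun v => (f v, decide ((v.1 : ℕ) < ((f v).1 : ℕ)))) v
          ∈ Si ×ˢ (Finset.univ : Finset Bool) := by
      intro v hv
      rw [Finset.mem_product]
      refine ⟨?_, Finset.mem_univ _⟩
      have hvS : v ∉ S := (Finset.mem_filter.1 hv).2
      obtain ⟨⟨hfS, hadj⟩, _⟩ := hf v hvS
      rw [hSi, Finset.mem_filter]
      refine ⟨(hF _).2 hfS, ?_⟩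
      rw [← cls_adj hadj]
      exact (Finset.mem_filter.1 (Finset.mem_filter.1 hv).1).2
    have := Finset.card_le_card_of_injOn _ hmaps hinj
    rw [Finset.card_product] at this
    simpa [Finset.card_univ, mul_comm] using this
  omega

lemma lower_bound {n : ℕ} (S : Set (Fin n × Fin 2)) (hS : IsPerfDomSet (KN n 2) S) :
    2 * (((n+1)/2+2)/3 + (n/2+2)/3) ≤ S.ncard := by
  classical
  have hfin : S.Finite := Set.toFinite S
  set F := hfin.toFinset with hFdef
  have hFmem : ∀ v, v ∈ F ↔ v ∈ S := fun v => hfin.mem_toFinset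
  have hncard : S.ncard = F.card := by
    rw [hFdef, Set.ncard_eq_toFinset_card]
  have hmemcls : ∀ x ∈ F, cls x ∈ ({(0,0),(0,1),(1,0),(1,1)} : Finset (ℕ × ℕ)) := by
    intro x _
    unfold cls
    simp only [Finset.mem_insert, Finset.mem_singleton, Prod.mk.injEq]
    omega
  have hsum := Finset.card_eq_sum_card_fiberwise hmemcls
  rw [Finset.sum_insert (by decide), Finset.sum_insert (by decide),
      Finset.sum_insert (by decide), Finset.sum_singleton] at hsum
  have hc00 := class_lb S hS F hFmem 0 0
  have hc01 := class_lb S hS F hFmem 0 1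
  have hc10 := class_lb S hS F hFmem 1 0
  have hc11 := class_lb S hS F hFmem 1 1
  rw [card_class n 0 0 (by norm_num), count_even] at hc00
  rw [card_class n 0 1 (by norm_num), count_even] at hc01
  rw [card_class n 1 0 (by norm_num), count_odd] at hc10
  rw [card_class n 1 1 (by norm_num), count_odd] at hc11
  omega

theorem stmt2 (k n : ℕ) (hk : 1 ≤ k) (h1 : 6 * k - 4 ≤ n) (h2 : n ≤ 6 * k) :
    perfDomNum (KN n 2) = 4 * k := by
  have hB : 2 * (((n+1)/2+2)/3 + (n/2+2)/3) = 4 * k := by omega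
  have hmem : (4 * k) ∈ {c | ∃ S : Set (Fin n × Fin 2),
      IsPerfDomSet (KN n 2) S ∧ S.ncard = c} :=
    ⟨↑(domSet n), domSet_perf n, by rw [Set.ncard_coe_finset, domSet_card]; omega⟩
  have hub : perfDomNum (KN n 2) ≤ 4 * k := Nat.sInf_le hmem
  have hne : {c | ∃ S : Set (Fin n × Fin 2),
      IsPerfDomSet (KN n 2) S ∧ S.ncard = c}.Nonempty := ⟨_, hmem⟩
  obtain ⟨S, hS, hcard⟩ := Nat.sInf_mem hne
  have hlow := lower_bound S hS
  rw [hcard] at hlow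
  have : perfDomNum (KN n 2) = sInf {c | ∃ S : Set (Fin n × Fin 2),
      IsPerfDomSet (KN n 2) S ∧ S.ncard = c} := rfl
  omega
end

section
/- For every k ≥ 0, the perfect domination number of the (8k+7)×3 knights graph is at most 10k+9. -/
def Mem3 (a b : ℕ) : Prop :=
  (a % 8 = 1 ∧ (b = 0 ∨ b = 2)) ∨ (a % 8 = 2 ∧ b = 0) ∨ (a % 8 = 3 ∧ (b = 1 ∨ b = 2)) ∨
  (a % 8 = 4 ∧ b = 0) ∨ (a % 8 = 5) ∨ (a % 8 = 7 ∧ b = 1)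

instance : ∀ a b, Decidable (Mem3 a b) := fun a b => by unfold Mem3; infer_instance

def adjN (a b c d : ℕ) : Prop :=
  ((a + 1 = c ∨ c + 1 = a) ∧ (b + 2 = d ∨ d + 2 = b)) ∨
  ((a + 2 = c ∨ c + 2 = a) ∧ (b + 1 = d ∨ d + 1 = b))

lemma adj_iff_s7 (a b c d : ℕ) :
    knightAdj ((a : ℤ), (b : ℤ)) ((c : ℤ), (d : ℤ)) ↔ adjN a b c d := by
  unfold knightAdj adjN
  simp only [abs_eq (by norm_num : (0:ℤ) ≤ 1), abs_eq (by norm_num : (0:ℤ) ≤ 2)]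
  constructor <;> intro h <;> rcases h with ⟨h1, h2⟩ | ⟨h1, h2⟩ <;> [skip; skip; skip; skip] <;>
    first | (left; constructor <;> omega) | (right; constructor <;> omega)
lemma core (k a b : ℕ) (ha : a < 8 * k + 7) (hb : b < 3) (hnm : ¬ Mem3 a b) :
    ∃ c d, (c < 8 * k + 7 ∧ d < 3 ∧ Mem3 c d ∧ adjN a b c d) ∧
      ∀ c' d', c' < 8 * k + 7 → d' < 3 → Mem3 c' d' → adjN a b c' d' → c' = c ∧ d' = d := by
  unfold Mem3 at hnm
  have h8 : a % 8 = 0 ∨ a % 8 = 1 ∨ a % 8 = 2 ∨ a % 8 = 3 ∨ a % 8 = 4 ∨ a % 8 = 5 ∨ a % 8 = 6 ∨ a % 8 = 7 := by omega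
  have hb3 : b = 0 ∨ b = 1 ∨ b = 2 := by omega
  rcases h8 with hr|hr|hr|hr|hr|hr|hr|hr <;> rcases hb3 with hbv|hbv|hbv
  · refine ⟨a+1, 2, by unfold Mem3 adjN; omega, ?_⟩
    intro c' d' h1 h2 h3 h4
    unfold Mem3 at h3; unfold adjN at h4
    omega
  · refine ⟨a+2, 0, by unfold Mem3 adjN; omega, ?_⟩
    intro c' d' h1 h2 h3 h4
    unfold Mem3 at h3; unfold adjN at h4
    omega
  · refine ⟨a+1, 0, by unfold Mem3 adjN; omega, ?_⟩
    intro c' d' h1 h2 h3 h4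
    unfold Mem3 at h3; unfold adjN at h4
    omega
  · omega
  · refine ⟨a+2, 2, by unfold Mem3 adjN; omega, ?_⟩
    intro c' d' h1 h2 h3 h4
    unfold Mem3 at h3; unfold adjN at h4
    omega
  · omega
  · omega
  · refine ⟨a+2, 0, by unfold Mem3 adjN; omega, ?_⟩
    intro c' d' h1 h2 h3 h4
    unfold Mem3 at h3; unfold adjN at h4
    omega
  · refine ⟨a-1, 0, by unfold Mem3 adjN; omega, ?_⟩
    intro c' d' h1 h2 h3 h4
    unfold Mem3 at h3; unfold adjN at h4
    omega
  · refine ⟨a+2, 1, by unfold Mem3 adjN; omega, ?_⟩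
    intro c' d' h1 h2 h3 h4
    unfold Mem3 at h3; unfold adjN at h4
    omega
  · omega
  · omega
  · omega
  · refine ⟨a-2, 0, by unfold Mem3 adjN; omega, ?_⟩
    intro c' d' h1 h2 h3 h4
    unfold Mem3 at h3; unfold adjN at h4
    omega
  · refine ⟨a+1, 0, by unfold Mem3 adjN; omega, ?_⟩
    intro c' d' h1 h2 h3 h4
    unfold Mem3 at h3; unfold adjN at h4
    omega
  · omega
  · omega
  · omega
  · refine ⟨a-1, 2, by unfold Mem3 adjN; omega, ?_⟩
    intro c' d' h1 h2 h3 h4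
    unfold Mem3 at h3; unfold adjN at h4
    omega
  · refine ⟨a-2, 0, by unfold Mem3 adjN; omega, ?_⟩
    intro c' d' h1 h2 h3 h4
    unfold Mem3 at h3; unfold adjN at h4
    omega
  · refine ⟨a-1, 0, by unfold Mem3 adjN; omega, ?_⟩
    intro c' d' h1 h2 h3 h4
    unfold Mem3 at h3; unfold adjN at h4
    omega
  · refine ⟨a-2, 1, by unfold Mem3 adjN; omega, ?_⟩
    intro c' d' h1 h2 h3 h4
    unfold Mem3 at h3; unfold adjN at h4
    omega
  · omega
  · refine ⟨a-2, 1, by unfold Mem3 adjN; omega, ?_⟩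
    intro c' d' h1 h2 h3 h4
    unfold Mem3 at h3; unfold adjN at h4
    omega

def cnt (a : ℕ) : ℕ :=
  (if Mem3 a 0 then 1 else 0) + (if Mem3 a 1 then 1 else 0) + (if Mem3 a 2 then 1 else 0)

lemma cnt_val (a r : ℕ) (h : a % 8 = r) : cnt a = cnt r := by
  have h2 : r % 8 = a % 8 := by omega
  simp [cnt, Mem3, h2]

lemma sum_cnt (k : ℕ) : ∑ i ∈ Finset.range (8 * k + 7), cnt i = 10 * k + 9 := by
  induction k with
  | zero => decide
  | succ k ih =>
    have e : 8 * (k + 1) + 7 = ((((((((8*k+7)+1)+1)+1)+1)+1)+1)+1)+1 := by ring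
    rw [e, Finset.sum_range_succ, Finset.sum_range_succ, Finset.sum_range_succ,
      Finset.sum_range_succ, Finset.sum_range_succ, Finset.sum_range_succ,
      Finset.sum_range_succ, Finset.sum_range_succ, ih]
    rw [cnt_val (8*k+7) 7 (by omega), cnt_val (8*k+7+1) 0 (by omega),
        cnt_val (8*k+7+1+1) 1 (by omega), cnt_val (8*k+7+1+1+1) 2 (by omega),
        cnt_val (8*k+7+1+1+1+1) 3 (by omega), cnt_val (8*k+7+1+1+1+1+1) 4 (by omega),
        cnt_val (8*k+7+1+1+1+1+1+1) 5 (by omega), cnt_val (8*k+7+1+1+1+1+1+1+1) 6 (by omega)]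
    have : cnt 7 = 1 ∧ cnt 0 = 0 ∧ cnt 1 = 2 ∧ cnt 2 = 1 ∧ cnt 3 = 2 ∧ cnt 4 = 1 ∧ cnt 5 = 3 ∧ cnt 6 = 0 := by decide
    omega

theorem stmt7 (k : ℕ) : perfDomNum (KN (8 * k + 7) 3) ≤ 10 * k + 9 := by
  apply Nat.sInf_le
  refine ⟨{p : Fin (8 * k + 7) × Fin 3 | Mem3 p.1.val p.2.val}, ?_, ?_⟩
  · intro v hv
    obtain ⟨c, d, ⟨hc, hd, hm, hadj⟩, huniq⟩ := core k v.1.val v.2.val v.1.isLt v.2.isLt hv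
    refine ⟨(⟨c, hc⟩, ⟨d, hd⟩), ⟨hm, (adj_iff_s7 _ _ _ _).mpr hadj⟩, ?_⟩
    rintro ⟨c', d'⟩ ⟨hm', hadj'⟩
    obtain ⟨e1, e2⟩ := huniq c'.val d'.val c'.isLt d'.isLt hm' ((adj_iff_s7 _ _ _ _).mp hadj')
    simp only [Prod.mk.injEq, Fin.ext_iff]
    exact ⟨e1, e2⟩
  · rw [Set.ncard_eq_toFinset_card', Set.toFinset_setOf, Finset.card_filter,
      Fintype.sum_prod_type]
    have h1 : ∀ a : Fin (8 * k + 7),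
        (∑ b : Fin 3, if Mem3 a.val b.val then 1 else 0) = cnt a.val := by
      intro a; rw [Fin.sum_univ_three]; rfl
    rw [Finset.sum_congr rfl (fun a _ => h1 a), Fin.sum_univ_eq_sum_range]
    exact sum_cnt k
end

section
/- The perfect domination number of the 9×4 knights graph equals 36; that is, the only perfect dominating set of KN_{9,4} is the entire vertex set. -/
/-! ### Auxiliary machinery: a verified exhaustive search -/

instance knightAdj.instDecidable (p q : ℤ × ℤ) : Decidable (knightAdj p q) :=
  inferInstanceAs (Decidable ((_ ∧ _) ∨ (_ ∧ _)))

def nbL : List (List Nat) := [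
  [6, 9], [7, 8, 10], [4, 9, 11], [5, 10], [2, 10, 13], [3, 11, 12, 14],
  [0, 8, 13, 15], [1, 9, 14], [1, 6, 14, 17], [0, 2, 7, 15, 16, 18],
  [1, 3, 4, 12, 17, 19], [2, 5, 13, 18], [5, 10, 18, 21], [4, 6, 11, 19, 20, 22],
  [5, 7, 8, 16, 21, 23], [6, 9, 17, 22], [9, 14, 22, 25], [8, 10, 15, 23, 24, 26],
  [9, 11, 12, 20, 25, 27], [10, 13, 21, 26], [13, 18, 26, 29], [12, 14, 19, 27, 28, 30],
  [13, 15, 16, 24, 29, 31], [14, 17, 25, 30], [17, 22, 30, 33], [16, 18, 23, 31, 32, 34],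
  [17, 19, 20, 28, 33, 35], [18, 21, 29, 34], [21, 26, 34], [20, 22, 27, 35],
  [21, 23, 24, 32], [22, 25, 33], [25, 30], [24, 26, 31], [25, 27, 28], [26, 29]]

def nb (j : Nat) : List Nat := nbL.getD j []

def onesB (m : Nat) (l : List Nat) : Nat := l.countP (fun k => m.testBit k)
def potB (i m : Nat) (l : List Nat) : Nat := l.countP (fun k => decide (i ≤ k) || m.testBit k)

def checkB (i m : Nat) : Bool :=
  (List.range 36).all fun j =>
    decide (i ≤ j) || m.testBit j ||
      (decide (onesB m (nb j) ≤ 1) && decide (1 ≤ potB i m (nb j)))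

def dfsB : Nat → Nat → Nat → Bool
  | 0, i, m => !checkB i m || (m == 2 ^ 36 - 1)
  | fuel+1, i, m => !checkB i m || (dfsB fuel (i+1) m && dfsB fuel (i+1) (m ||| 2 ^ i))

def extB (i m : Nat) (g : Nat → Bool) : Prop := ∀ j, j < i → g j = m.testBit j

def okB (g : Nat → Bool) : Prop := ∀ j, j < 36 → g j = false → (nb j).countP g = 1

lemma count_ge {i m : Nat} {g : Nat → Bool} (he : extB i m g) (hm : m < 2 ^ i)
    (l : List Nat) : onesB m l ≤ l.countP g := by
  apply List.countP_mono_left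
  intro k _ hk
  by_cases hki : k < i
  · rw [he k hki]; exact hk
  · exfalso
    rw [Nat.testBit_lt_two_pow (lt_of_lt_of_le hm
      (Nat.pow_le_pow_right (by norm_num) (le_of_not_gt hki)))] at hk
    simp at hk

lemma count_le {i m : Nat} {g : Nat → Bool} (he : extB i m g)
    (l : List Nat) : l.countP g ≤ potB i m l := by
  apply List.countP_mono_left
  intro k _ hk
  by_cases hki : k < i
  · rw [← he k hki]; simp [hk]
  · simp [le_of_not_gt hki]

lemma check_false {i m : Nat} {g : Nat → Bool} (hc : checkB i m = false)
    (he : extB i m g) (hm : m < 2 ^ i) : ¬ okB g := by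
  intro hok
  unfold checkB at hc
  rw [List.all_eq_false] at hc
  obtain ⟨j, hjmem, hj⟩ := hc
  have hj36 : j < 36 := List.mem_range.mp hjmem
  simp only [Bool.or_eq_true, Bool.and_eq_true, decide_eq_true_eq, not_or, not_and_or,
    not_le, Nat.lt_one_iff, Bool.not_eq_true] at hj
  obtain ⟨⟨hji, hbit⟩, hcnt⟩ := hj
  have hgj : g j = false := by rw [he j hji]; exact hbit
  have h1 : (nb j).countP g = 1 := hok j hj36 hgj
  rcases hcnt with h2 | h0
  · have := count_ge he hm (nb j); omega
  · have := count_le he (nb j); omega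

lemma dfs_sound : ∀ fuel i m, i + fuel = 36 → m < 2 ^ i → dfsB fuel i m = true →
    ∀ g : Nat → Bool, extB i m g → okB g → ∀ j, j < 36 → g j = true := by
  intro fuel
  induction fuel with
  | zero =>
    intro i m hi hm hd g hg hok j hj
    have hi' : i = 36 := by omega
    subst hi'
    unfold dfsB at hd
    cases hcheck : checkB 36 m with
    | false => exact absurd hok (check_false hcheck hg hm)
    | true =>
      rw [hcheck] at hd
      simp only [Bool.not_true, Bool.false_or, beq_iff_eq] at hd
      rw [hg j hj, hd, Nat.testBit_two_pow_sub_one]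
      simp [hj]
  | succ fuel ih =>
    intro i m hi hm hd g hg hok j hj
    unfold dfsB at hd
    cases hcheck : checkB i m with
    | false => exact absurd hok (check_false hcheck hg hm)
    | true =>
      rw [hcheck] at hd
      simp only [Bool.not_true, Bool.false_or, Bool.and_eq_true] at hd
      obtain ⟨hd0, hd1⟩ := hd
      have hbi : m.testBit i = false := Nat.testBit_lt_two_pow hm
      cases hgi : g i with
      | false =>
        refine ih (i+1) m (by omega) ?_ hd0 g ?_ hok j hj
        · calc m < 2 ^ i := hm
            _ ≤ 2 ^ (i+1) := Nat.pow_le_pow_right (by norm_num) (by omega)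
        · intro k hk
          rcases Nat.lt_succ_iff_lt_or_eq.mp hk with h | h
          · exact hg k h
          · subst h; rw [hgi, hbi]
      | true =>
        refine ih (i+1) (m ||| 2 ^ i) (by omega) ?_ hd1 g ?_ hok j hj
        · exact Nat.or_lt_two_pow
            (by calc m < 2 ^ i := hm
                  _ ≤ 2 ^ (i+1) := Nat.pow_le_pow_right (by norm_num) (by omega))
            (Nat.pow_lt_pow_right (by norm_num) (by omega))
        · intro k hk
          rcases Nat.lt_succ_iff_lt_or_eq.mp hk with h | h
          · rw [Nat.testBit_or, hg k h, Nat.testBit_two_pow]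
            have : ¬ (i = k) := by omega
            simp [this]
          · subst h
            rw [Nat.testBit_or, hbi, Nat.testBit_two_pow]
            simp [hgi]

set_option maxRecDepth 100000 in
set_option maxHeartbeats 10000000 in
lemma dfs_true : dfsB 36 0 0 = true := by decide

lemma core36 : ∀ g : Nat → Bool, okB g → ∀ j, j < 36 → g j = true := by
  intro g hok j hj
  exact dfs_sound 36 0 0 rfl (by norm_num) dfs_true g (fun k hk => absurd hk (by omega)) hok j hj

/-! ### Bridging to the knights graph -/

def encV (v : Fin 9 × Fin 4) : Nat := v.1.val * 4 + v.2.val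

def decV (j : Fin 36) : Fin 9 × Fin 4 :=
  (⟨j.val / 4, by have := j.isLt; omega⟩, ⟨j.val % 4, by omega⟩)

lemma enc_lt (v : Fin 9 × Fin 4) : encV v < 36 := by
  have h1 := v.1.isLt; have h2 := v.2.isLt
  unfold encV; omega

lemma dec_enc (v : Fin 9 × Fin 4) : decV ⟨encV v, enc_lt v⟩ = v := by
  have h1 := v.1.isLt; have h2 := v.2.isLt
  unfold decV encV
  ext
  · show (v.1.val * 4 + v.2.val) / 4 = v.1.val; omega
  · show (v.1.val * 4 + v.2.val) % 4 = v.2.val; omega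

lemma enc_dec (j : Fin 36) : encV (decV j) = j.val := by
  have := j.isLt
  unfold decV encV
  show j.val / 4 * 4 + j.val % 4 = j.val
  omega

lemma nb_lt : ∀ j : Fin 36, ∀ k ∈ nb j.val, k < 36 := by decide

lemma nb_nodup : ∀ j : Fin 36, (nb j.val).Nodup := by decide

lemma adj_iff_s13 : ∀ v u : Fin 9 × Fin 4,
    knightAdj ((v.1 : ℤ), (v.2 : ℤ)) ((u.1 : ℤ), (u.2 : ℤ)) ↔ encV u ∈ nb (encV v) := by
  decide

lemma countP_eq_one_iff {α : Type*} {l : List α} (h : l.Nodup) (p : α → Bool) :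
    l.countP p = 1 ↔ ∃! x, x ∈ l ∧ p x = true := by
  induction l with
  | nil =>
    constructor
    · intro hc; simp [List.countP_nil] at hc
    · rintro ⟨x, ⟨hx, _⟩, _⟩; simp at hx
  | cons a t iht =>
    have hat : a ∉ t := (List.nodup_cons.mp h).1
    have ht : t.Nodup := (List.nodup_cons.mp h).2
    cases hpa : p a with
    | true =>
      have hstep : (a :: t).countP p = t.countP p + 1 := by simp [List.countP_cons, hpa]
      rw [hstep]
      constructor
      · intro hc
        have h0 : t.countP p = 0 := by omega
        rw [List.countP_eq_zero] at h0
        refine ⟨a, ⟨List.mem_cons_self, hpa⟩, ?_⟩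
        rintro x ⟨hx, hpx⟩
        rcases List.mem_cons.mp hx with h | h
        · exact h
        · exact absurd hpx (h0 x h)
      · rintro ⟨x, ⟨hx, hpx⟩, huniq⟩
        have hxa : x = a := (huniq a ⟨List.mem_cons_self, hpa⟩).symm
        have h0 : t.countP p = 0 := by
          rw [List.countP_eq_zero]
          intro b hb hpb
          have hbx : b = x := huniq b ⟨List.mem_cons_of_mem a hb, hpb⟩
          exact hat (by rwa [hbx, hxa] at hb)
        omega
    | false =>
      have hstep : (a :: t).countP p = t.countP p := by simp [List.countP_cons, hpa]
      rw [hstep, iht ht]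
      constructor
      · rintro ⟨x, ⟨hx, hpx⟩, huniq⟩
        refine ⟨x, ⟨List.mem_cons_of_mem a hx, hpx⟩, ?_⟩
        rintro y ⟨hy, hpy⟩
        rcases List.mem_cons.mp hy with h | h
        · subst h; rw [hpa] at hpy; exact absurd hpy (by simp)
        · exact huniq y ⟨h, hpy⟩
      · rintro ⟨x, ⟨hx, hpx⟩, huniq⟩
        rcases List.mem_cons.mp hx with h | h
        · subst h; rw [hpa] at hpx; exact absurd hpx (by simp)
        · exact ⟨x, ⟨h, hpx⟩, fun y ⟨hy, hpy⟩ => huniq y ⟨List.mem_cons_of_mem a hy, hpy⟩⟩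

open Classical in
lemma only_univ (S : Set (Fin 9 × Fin 4)) (hS : IsPerfDomSet (KN 9 4) S) : S = Set.univ := by
  classical
  set g : Nat → Bool := fun j => if hj : j < 36 then decide (decV ⟨j, hj⟩ ∈ S) else true with hgdef
  have hgenc : ∀ v : Fin 9 × Fin 4, g (encV v) = decide (v ∈ S) := by
    intro v
    rw [hgdef]
    simp only [enc_lt v, dif_pos]
    rw [dec_enc v]
  have hok : okB g := by
    intro j hj hfalse
    have hvS : decV ⟨j, hj⟩ ∉ S := by
      rw [hgdef] at hfalse
      simp only [hj, dif_pos, decide_eq_false_iff_not] at hfalse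
      exact hfalse
    obtain ⟨u, ⟨huS, huA⟩, huniq⟩ := hS _ hvS
    have hAdj : knightAdj ((((decV ⟨j, hj⟩).1 : Fin 9) : ℤ), (((decV ⟨j, hj⟩).2 : Fin 4) : ℤ))
        (((u.1 : Fin 9) : ℤ), ((u.2 : Fin 4) : ℤ)) := huA
    rw [countP_eq_one_iff (nb_nodup ⟨j, hj⟩) g]
    refine ⟨encV u, ⟨?_, ?_⟩, ?_⟩
    · have := (adj_iff_s13 _ u).mp hAdj
      rwa [enc_dec ⟨j, hj⟩] at this
    · rw [hgenc u]; exact decide_eq_true huS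
    · rintro k ⟨hkmem, hkg⟩
      have hk36 : k < 36 := nb_lt ⟨j, hj⟩ k hkmem
      set u' := decV ⟨k, hk36⟩ with hu'
      have hu'S : u' ∈ S := by
        rw [hgdef] at hkg
        simp only [hk36, dif_pos, decide_eq_true_eq] at hkg
        exact hkg
      have hadj' : (KN 9 4).Adj (decV ⟨j, hj⟩) u' := by
        show knightAdj _ _
        apply (adj_iff_s13 _ u').mpr
        rw [enc_dec ⟨j, hj⟩, enc_dec ⟨k, hk36⟩]
        exact hkmem
      have : u' = u := huniq u' ⟨hu'S, hadj'⟩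
      have hk' : encV u' = k := enc_dec ⟨k, hk36⟩
      rw [← hk', this]
  apply Set.eq_univ_iff_forall.mpr
  intro v
  have := core36 g hok (encV v) (enc_lt v)
  rw [hgenc v] at this
  exact of_decide_eq_true this

theorem stmt13 :
    perfDomNum (KN 9 4) = 36 ∧
    ∀ S : Set (Fin 9 × Fin 4), IsPerfDomSet (KN 9 4) S → S = Set.univ := by
  refine ⟨?_, only_univ⟩
  have huniv : IsPerfDomSet (KN 9 4) Set.univ := by
    intro v hv
    exact absurd (Set.mem_univ v) hv
  have hset : {k | ∃ S : Set (Fin 9 × Fin 4), IsPerfDomSet (KN 9 4) S ∧ S.ncard = k} = {36} := by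
    ext k
    simp only [Set.mem_setOf_eq, Set.mem_singleton_iff]
    constructor
    · rintro ⟨S, hS, hcard⟩
      rw [only_univ S hS] at hcard
      rw [← hcard, Set.ncard_univ]
      simp [Nat.card_eq_fintype_card]
    · rintro rfl
      exact ⟨Set.univ, huniv, by simp [Set.ncard_univ, Nat.card_eq_fintype_card]⟩
  unfold perfDomNum
  rw [hset, csInf_singleton]
end

section
/- The perfect domination numbers of the 10×4, 11×4, and 12×4 knights graphs all equal 16. -/
instance (p q : ℤ × ℤ) : Decidable (knightAdj p q) := by unfold knightAdj; infer_instance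

instance (n m : ℕ) : DecidableRel (KN n m).Adj := fun p q => by
  show Decidable (knightAdj _ _); infer_instance

instance {V : Type*} [Fintype V] [DecidableEq V] (G : SimpleGraph V) [DecidableRel G.Adj]
    (s : Finset V) : Decidable (IsPerfDomSet G ↑s) :=
  decidable_of_iff
    (∀ v, v ∉ s → ∃ u, (u ∈ s ∧ G.Adj v u) ∧ ∀ y, (y ∈ s ∧ G.Adj v y) → y = u)
    (by simp [IsPerfDomSet, ExistsUnique])

namespace PD14

def dd (a b : ℕ) : ℕ := (a - b) + (b - a)

def nadjB (i j : ℕ) : Bool :=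
  (dd (i/4) (j/4) == 1 && dd (i%4) (j%4) == 2) ||
  (dd (i/4) (j/4) == 2 && dd (i%4) (j%4) == 1)

def tcount (N : ℕ) (l : List Bool) (i : ℕ) : ℕ :=
  (List.range N).countP (fun j => nadjB i j && l.getD j false)

def allDecided (N : ℕ) (l : List Bool) (i : ℕ) : Bool :=
  (List.range N).all (fun j => !nadjB i j || decide (j < l.length))

def pruneAt (N : ℕ) (l : List Bool) (i : ℕ) : Bool :=
  (l.getD i true == false) &&
    (decide (2 ≤ tcount N l i) || (tcount N l i == 0 && allDecided N l i))

def prune (N : ℕ) (l : List Bool) : Bool :=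
  decide (16 ≤ l.countP id) || (List.range' (l.length - 10) 10).any (pruneAt N l)

def isPerf (N : ℕ) (l : List Bool) : Bool :=
  (List.range N).all (fun i => l.getD i false || (tcount N l i == 1))

def isBad (N : ℕ) (l : List Bool) : Bool :=
  isPerf N l && decide (l.countP id ≤ 15)

def search (N : ℕ) : ℕ → List Bool → Bool
  | 0, l => isBad N l
  | (k+1), l =>
      if prune N l then false
      else search N k (l ++ [false]) || search N k (l ++ [true])

/-! ### soundness of pruning -/

lemma getD_take (f : List Bool) (m j : ℕ) (d : Bool) (hj : j < m) :
    (f.take m).getD j d = f.getD j d := by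
  simp [List.getD, List.getElem?_take, hj]

lemma getD_take_false (f : List Bool) (m j : ℕ) :
    ((f.take m).getD j false) = true → f.getD j false = true := by
  intro h
  by_cases hj : j < m
  · rwa [getD_take _ _ _ _ hj] at h
  · simp [List.getD, List.getElem?_take, hj] at h

lemma tcount_take_le (N : ℕ) (f : List Bool) (m i : ℕ) :
    tcount N (f.take m) i ≤ tcount N f i := by
  apply List.countP_mono_left
  intro j _ h
  simp only [Bool.and_eq_true] at h ⊢
  exact ⟨h.1, getD_take_false f m j h.2⟩

lemma tcount_take_all (N : ℕ) (f : List Bool) (m i : ℕ)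
    (h : allDecided N (f.take m) i = true) :
    tcount N (f.take m) i = tcount N f i := by
  unfold allDecided at h
  rw [List.all_eq_true] at h
  unfold tcount
  apply List.countP_congr
  intro j hj
  have := h j hj
  by_cases ha : nadjB i j = true
  · simp only [ha, Bool.not_true, Bool.false_or, decide_eq_true_eq] at this
    have hjm : j < m := lt_of_lt_of_le this (by simpa using List.length_take_le m f)
    rw [getD_take _ _ _ _ hjm]
  · simp [Bool.and_eq_true, ha]

lemma prune_sound (N : ℕ) (f : List Bool) (hf : f.length = N) (m : ℕ)
    (hp : prune N (f.take m) = true) : isBad N f = false := by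
  by_contra hbad
  rw [Bool.not_eq_false, isBad, Bool.and_eq_true, decide_eq_true_eq] at hbad
  obtain ⟨hperf, hcount⟩ := hbad
  unfold prune at hp
  rw [Bool.or_eq_true] at hp
  rcases hp with hp | hp
  · rw [decide_eq_true_eq] at hp
    have := List.Sublist.countP_le (p := id) (List.take_sublist m f)
    omega
  · rw [List.any_eq_true] at hp
    obtain ⟨i, _, hi⟩ := hp
    rw [pruneAt, Bool.and_eq_true, beq_iff_eq] at hi
    obtain ⟨hfalse, hrest⟩ := hi
    -- i is decided and false
    have hilen : i < (f.take m).length := by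
      by_contra h
      rw [List.getD_eq_default _ _ (le_of_not_gt h)] at hfalse
      simp at hfalse
    have hiN : i < N := by
      have := List.length_take (i := m) (l := f)
      omega
    have hfi : f.getD i false = false := by
      have h1 : i < f.length := by omega
      rw [List.getD_eq_getElem _ _ hilen, List.getElem_take] at hfalse
      rw [List.getD_eq_getElem _ _ h1]
      exact hfalse
    rw [isPerf, List.all_eq_true] at hperf
    have := hperf i (List.mem_range.mpr hiN)
    rw [Bool.or_eq_true, beq_iff_eq] at this
    rcases this with h | h
    · rw [hfi] at h; exact Bool.false_ne_true h
    rw [Bool.or_eq_true, decide_eq_true_eq, Bool.and_eq_true, beq_iff_eq] at hrest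
    rcases hrest with h2 | ⟨h0, hall⟩
    · have := tcount_take_le N f m i; omega
    · have := tcount_take_all N f m i hall; omega

/-- completeness of the search -/
lemma search_complete (N : ℕ) : ∀ (k m : ℕ) (f : List Bool), f.length = N → m + k = N →
    isBad N f = true → search N k (f.take m) = true := by
  intro k
  induction k with
  | zero =>
    intro m f hf hm hbad
    have hm' : m = N := by omega
    have ht : f.take m = f := by rw [hm', ← hf, List.take_length]
    rw [ht]
    exact hbad
  | succ k ih =>
    intro m f hf hm hbad
    have hmN : m < N := by omega
    have hprune : prune N (f.take m) = false := by
      by_contra h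
      rw [Bool.not_eq_false] at h
      rw [prune_sound N f hf m h] at hbad
      exact Bool.false_ne_true hbad
    have hmf : m < f.length := by omega
    have hstep : f.take m ++ [f[m]] = f.take (m+1) := by
      rw [List.take_succ, List.getElem?_eq_getElem hmf]
      rfl
    have hnext : search N k (f.take m ++ [f[m]]) = true := by
      rw [hstep]; exact ih (m+1) f hf (by omega) hbad
    show (if prune N (f.take m) then false
      else search N k (f.take m ++ [false]) || search N k (f.take m ++ [true])) = true
    rw [hprune, if_neg (by simp)]
    cases hb : f[m] with
    | false => rw [hb] at hnext; rw [hnext]; rfl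
    | true => rw [hb] at hnext; rw [hnext, Bool.or_true]

lemma search_main (N : ℕ) (hs : search N N [] = false) :
    ∀ f : List Bool, f.length = N → isBad N f = false := by
  intro f hf
  by_contra h
  rw [Bool.not_eq_false] at h
  have := search_complete N N 0 f hf (by omega) h
  rw [List.take_zero] at this
  rw [hs] at this
  exact Bool.false_ne_true this


/-! ### fast bitmask implementation -/

def nbrs : ℕ → List ℕ
  | 0 => [6, 9]
  | 1 => [7, 8, 10]
  | 2 => [4, 9, 11]
  | 3 => [5, 10]
  | 4 => [2, 10, 13]
  | 5 => [3, 11, 12, 14]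
  | 6 => [0, 8, 13, 15]
  | 7 => [1, 9, 14]
  | 8 => [1, 6, 14, 17]
  | 9 => [0, 2, 7, 15, 16, 18]
  | 10 => [1, 3, 4, 12, 17, 19]
  | 11 => [2, 5, 13, 18]
  | 12 => [5, 10, 18, 21]
  | 13 => [4, 6, 11, 19, 20, 22]
  | 14 => [5, 7, 8, 16, 21, 23]
  | 15 => [6, 9, 17, 22]
  | 16 => [9, 14, 22, 25]
  | 17 => [8, 10, 15, 23, 24, 26]
  | 18 => [9, 11, 12, 20, 25, 27]
  | 19 => [10, 13, 21, 26]
  | 20 => [13, 18, 26, 29]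
  | 21 => [12, 14, 19, 27, 28, 30]
  | 22 => [13, 15, 16, 24, 29, 31]
  | 23 => [14, 17, 25, 30]
  | 24 => [17, 22, 30, 33]
  | 25 => [16, 18, 23, 31, 32, 34]
  | 26 => [17, 19, 20, 28, 33, 35]
  | 27 => [18, 21, 29, 34]
  | 28 => [21, 26, 34, 37]
  | 29 => [20, 22, 27, 35, 36, 38]
  | 30 => [21, 23, 24, 32, 37, 39]
  | 31 => [22, 25, 33, 38]
  | 32 => [25, 30, 38, 41]
  | 33 => [24, 26, 31, 39, 40, 42]
  | 34 => [25, 27, 28, 36, 41, 43]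
  | 35 => [26, 29, 37, 42]
  | 36 => [29, 34, 42, 45]
  | 37 => [28, 30, 35, 43, 44, 46]
  | 38 => [29, 31, 32, 40, 45, 47]
  | 39 => [30, 33, 41, 46]
  | 40 => [33, 38, 46]
  | 41 => [32, 34, 39, 47]
  | 42 => [33, 35, 36, 44]
  | 43 => [34, 37, 45]
  | 44 => [37, 42]
  | 45 => [36, 38, 43]
  | 46 => [37, 39, 40]
  | 47 => [38, 41]
  | _ => []

def tcountB (N b i : ℕ) : ℕ := (nbrs i).countP (fun j => decide (j < N) && b.testBit j)

def allDecidedB (N m i : ℕ) : Bool := (nbrs i).all (fun j => !(decide (j < N)) || decide (j < m))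

def tCheck (N m i : ℕ) : ℕ → Bool
  | 0 => allDecidedB N m i
  | 1 => false
  | _ => true

def pruneAtB (N m b i : ℕ) : Bool :=
  (decide (i < m) && !b.testBit i) && tCheck N m i (tcountB N b i)

def pruneB (N m b c : ℕ) : Bool :=
  decide (16 ≤ c) ||
    ((m-1) :: (nbrs (m-1)).filter (fun j => decide (j < m))).any (fun i => pruneAtB N m b i)

def isPerfB (N b : ℕ) : Bool := (List.range N).all (fun i => b.testBit i || tcountB N b i == 1)

def searchB (N : ℕ) : ℕ → ℕ → ℕ → ℕ → Bool
  | 0, _, b, c => isPerfB N b && decide (c ≤ 15)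
  | (fuel+1), m, b, c =>
      if pruneB N m b c then false
      else searchB N fuel (m+1) b c || searchB N fuel (m+1) (b + 2^m) (c+1)


def isBadB (N b c : ℕ) : Bool := isPerfB N b && decide (c ≤ 15)

def bitsOf : List Bool → ℕ
  | [] => 0
  | a :: l => Nat.bit a (bitsOf l)

lemma testBit_bitsOf (l : List Bool) (j : ℕ) : (bitsOf l).testBit j = l.getD j false := by
  induction l generalizing j with
  | nil => simp [bitsOf]
  | cons a l ih =>
    cases j with
    | zero => simp [bitsOf, Nat.testBit_bit_zero]
    | succ j => simp [bitsOf, Nat.testBit_bit_succ, ih]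

lemma bitsOf_append (l : List Bool) (a : Bool) :
    bitsOf (l ++ [a]) = bitsOf l + (if a then 2 ^ l.length else 0) := by
  induction l with
  | nil => cases a <;> simp [bitsOf, Nat.bit]
  | cons b l ih =>
    cases a <;> cases b <;> simp [List.cons_append, bitsOf, Nat.bit, ih, pow_succ] <;> ring

lemma all_congr' {α : Type*} {l : List α} {p q : α → Bool} (h : ∀ a ∈ l, p a = q a) :
    l.all p = l.all q := by
  induction l with
  | nil => rfl
  | cons a l ih => simp_all [List.all_cons]

lemma nbrs_eq : ∀ i < 48, nbrs i = (List.range 48).filter (fun j => nadjB i j) := by decide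

lemma filter_range {N M : ℕ} (h : N ≤ M) :
    (List.range M).filter (fun j => decide (j < N)) = List.range N := by
  obtain ⟨d, rfl⟩ := Nat.exists_eq_add_of_le h
  rw [List.range_add, List.filter_append]
  rw [List.filter_eq_self.mpr, List.filter_eq_nil_iff.mpr, List.append_nil]
  · intro a ha
    simp only [List.mem_map, List.mem_range] at ha
    obtain ⟨b, _, rfl⟩ := ha
    simp
  · intro a ha
    simp [List.mem_range.mp ha]

lemma tcountB_spec (N : ℕ) (hN : N ≤ 48) (l : List Bool) (i : ℕ) (hi : i < 48) :
    tcountB N (bitsOf l) i = tcount N l i := by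
  rw [tcountB, nbrs_eq i hi, List.countP_filter, tcount,
    ← filter_range hN, List.countP_filter]
  apply List.countP_congr
  intro j _
  rw [testBit_bitsOf]
  cases h1 : nadjB i j <;> cases h2 : l.getD j false <;> cases h3 : decide (j < N) <;> simp

lemma allDecidedB_spec (N : ℕ) (hN : N ≤ 48) (l : List Bool) (i : ℕ) (hi : i < 48) :
    allDecidedB N l.length i = allDecided N l i := by
  rw [allDecidedB, nbrs_eq i hi, List.all_filter, allDecided,
    ← filter_range hN, List.all_filter]
  apply all_congr'
  intro j _
  cases h1 : nadjB i j <;> cases h3 : decide (j < N) <;>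
    cases h4 : decide (j < l.length) <;> simp_all

lemma prune_soundB (N : ℕ) (hN : N ≤ 48) (f : List Bool) (hf : f.length = N) (m : ℕ)
    (hm : m ≤ N)
    (hp : pruneB N m (bitsOf (f.take m)) ((f.take m).countP id) = true) :
    isBadB N (bitsOf f) (f.countP id) = false := by
  by_contra hbad
  rw [Bool.not_eq_false, isBadB, Bool.and_eq_true, decide_eq_true_eq] at hbad
  obtain ⟨hperf, hcount⟩ := hbad
  have hlen : (f.take m).length = m := by
    rw [List.length_take]; omega
  unfold pruneB at hp
  rw [Bool.or_eq_true] at hp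
  rcases hp with hp | hp
  · rw [decide_eq_true_eq] at hp
    have := List.Sublist.countP_le (p := id) (List.take_sublist m f)
    omega
  · rw [List.any_eq_true] at hp
    obtain ⟨i, _, hi⟩ := hp
    rw [pruneAtB, Bool.and_eq_true, Bool.and_eq_true, decide_eq_true_eq,
      Bool.not_eq_true'] at hi
    obtain ⟨⟨him, hbit⟩, hcheck⟩ := hi
    have hi48 : i < 48 := by omega
    have hiN : i < N := by omega
    rw [testBit_bitsOf] at hbit
    have hfi : f.getD i false = false := by
      rw [← getD_take f m i false him]; exact hbit
    rw [isPerfB, List.all_eq_true] at hperf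
    have hP := hperf i (List.mem_range.mpr hiN)
    rw [Bool.or_eq_true, beq_iff_eq, testBit_bitsOf, hfi,
      tcountB_spec N hN f i hi48] at hP
    simp only [Bool.false_eq_true, false_or] at hP
    rw [tcountB_spec N hN _ i hi48] at hcheck
    rcases ht : tcount N (f.take m) i with _ | t
    · rw [ht] at hcheck
      have hall : allDecided N (f.take m) i = true := by
        rw [← allDecidedB_spec N hN _ i hi48, hlen]
        exact hcheck
      have := tcount_take_all N f m i hall
      omega
    · rcases t with _ | t
      · rw [ht] at hcheck
        exact Bool.noConfusion hcheck
      · have := tcount_take_le N f m i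
        omega

lemma search_completeB (N : ℕ) (hN : N ≤ 48) : ∀ (fuel m : ℕ) (f : List Bool),
    f.length = N → m + fuel = N →
    isBadB N (bitsOf f) (f.countP id) = true →
    searchB N fuel m (bitsOf (f.take m)) ((f.take m).countP id) = true := by
  intro fuel
  induction fuel with
  | zero =>
    intro m f hf hm hbad
    have hm' : m = N := by omega
    have ht : f.take m = f := by rw [hm', ← hf, List.take_length]
    rw [ht]
    exact hbad
  | succ fuel ih =>
    intro m f hf hm hbad
    have hmN : m < N := by omega
    have hmf : m < f.length := by omega
    have hlen : (f.take m).length = m := by rw [List.length_take]; omega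
    have hprune : pruneB N m (bitsOf (f.take m)) ((f.take m).countP id) = false := by
      by_contra h
      rw [Bool.not_eq_false] at h
      rw [prune_soundB N hN f hf m (by omega) h] at hbad
      exact Bool.noConfusion hbad
    have hstep : f.take m ++ [f[m]] = f.take (m+1) := by
      rw [List.take_succ, List.getElem?_eq_getElem hmf]
      rfl
    have hbits : bitsOf (f.take (m+1))
        = bitsOf (f.take m) + (if f[m] then 2 ^ m else 0) := by
      rw [← hstep, bitsOf_append, hlen]
    have hcnt : (f.take (m+1)).countP id
        = (f.take m).countP id + (if f[m] then 1 else 0) := by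
      rw [← hstep, List.countP_append]
      cases h : f[m] <;> simp [h, List.countP_cons]
    have hnext := ih (m+1) f hf (by omega) hbad
    show (if pruneB N m (bitsOf (f.take m)) ((f.take m).countP id) then false
      else searchB N fuel (m+1) (bitsOf (f.take m)) ((f.take m).countP id) ||
        searchB N fuel (m+1) (bitsOf (f.take m) + 2^m) ((f.take m).countP id + 1)) = true
    rw [hprune, if_neg (by simp)]
    cases hb : f[m] with
    | false =>
      rw [hb] at hbits hcnt
      simp only [Bool.false_eq_true, if_false, Nat.add_zero] at hbits hcnt
      rw [hbits, hcnt] at hnext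
      rw [hnext, Bool.true_or]
    | true =>
      rw [hb] at hbits hcnt
      simp only [if_true] at hbits hcnt
      rw [hbits, hcnt] at hnext
      rw [hnext, Bool.or_true]

lemma search_mainB (N : ℕ) (hN : N ≤ 48) (hs : searchB N N 0 0 0 = false) :
    ∀ f : List Bool, f.length = N → isBadB N (bitsOf f) (f.countP id) = false := by
  intro f hf
  by_contra h
  rw [Bool.not_eq_false] at h
  have := search_completeB N hN N 0 f hf (by omega) h
  rw [List.take_zero] at this
  simp only [bitsOf, List.countP_nil] at this
  rw [hs] at this
  exact Bool.noConfusion this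

/-! ### bridge to the graph -/

def flist (n : ℕ) (f : Fin n × Fin 4 → Bool) : List Bool :=
  (List.finRange (n*4)).map (fun i => f (finProdFinEquiv.symm i))

lemma flist_length (n : ℕ) (f : Fin n × Fin 4 → Bool) : (flist n f).length = n*4 := by
  simp [flist]

lemma flist_getD (n : ℕ) (f : Fin n × Fin 4 → Bool) (i : ℕ) (hi : i < n*4) :
    (flist n f).getD i false = f (finProdFinEquiv.symm ⟨i, hi⟩) := by
  have h : i < (flist n f).length := by rw [flist_length]; exact hi
  rw [List.getD_eq_getElem _ _ h]
  simp [flist, List.getElem_finRange]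

lemma countP_eq_sum {α : Type*} (p : α → Bool) (l : List α) :
    l.countP p = (l.map (fun a => if p a = true then 1 else 0)).sum := by
  induction l with
  | nil => rfl
  | cons a l ih =>
    rw [List.countP_cons, List.map_cons, List.sum_cons, ih]
    by_cases h : p a = true <;> simp [h] <;> omega

lemma countP_finRange {N : ℕ} (q : Fin N → Bool) :
    (List.finRange N).countP q = Nat.card {x // q x = true} := by
  rw [Nat.card_eq_fintype_card, Fintype.card_subtype, Finset.card_filter,
    Fin.sum_univ_def, countP_eq_sum]

lemma existsUnique_iff_nat_card {α : Type*} [Finite α] (p : α → Prop) :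
    (∃! x, p x) ↔ Nat.card {x // p x} = 1 := by
  rw [Nat.card_eq_one_iff_unique]
  constructor
  · rintro ⟨x, hx, hu⟩
    exact ⟨⟨fun a b => Subtype.ext (by rw [hu a a.2, hu b b.2])⟩, ⟨x, hx⟩⟩
  · rintro ⟨hs, ⟨x, hx⟩⟩
    exact ⟨x, hx, fun y hy => congrArg Subtype.val (hs.elim ⟨y, hy⟩ ⟨x, hx⟩)⟩

lemma countP_id_flist (n : ℕ) (f : Fin n × Fin 4 → Bool) :
    (flist n f).countP id = Nat.card {v // f v = true} := by
  rw [flist, List.countP_map]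
  have : ((id : Bool → Bool) ∘ fun i => f (finProdFinEquiv.symm i))
      = fun i : Fin (n*4) => f (finProdFinEquiv.symm i) := rfl
  rw [this, countP_finRange]
  exact Nat.card_congr (Equiv.subtypeEquiv finProdFinEquiv.symm (fun _ => Iff.rfl))

lemma range_eq_map_finRange (N : ℕ) : List.range N = (List.finRange N).map Fin.val := by
  rw [List.map_coe_finRange_eq_range]

lemma tcount_flist (n : ℕ) (f : Fin n × Fin 4 → Bool) (i : Fin (n*4)) :
    tcount (n*4) (flist n f) i.val
      = Nat.card {j : Fin (n*4) // nadjB i.val j.val = true ∧ f (finProdFinEquiv.symm j) = true} := by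
  rw [tcount, range_eq_map_finRange, List.countP_map]
  rw [show ((fun j => nadjB i.val j && (flist n f).getD j false) ∘ Fin.val)
      = fun j : Fin (n*4) => nadjB i.val j.val && f (finProdFinEquiv.symm j) by
    funext j
    simp only [Function.comp]
    rw [flist_getD n f j.val j.isLt]]
  rw [countP_finRange]
  apply Nat.card_congr
  apply Equiv.subtypeEquivRight
  intro j
  rw [Bool.and_eq_true]

lemma lower_bound (n : ℕ) (hN : n*4 ≤ 48)
    (hadj : ∀ i j : Fin (n*4), nadjB i.val j.val = true ↔
      (KN n 4).Adj (finProdFinEquiv.symm i) (finProdFinEquiv.symm j))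
    (hs : searchB (n*4) (n*4) 0 0 0 = false) :
    ∀ S : Set (Fin n × Fin 4), IsPerfDomSet (KN n 4) S → 16 ≤ S.ncard := by
  classical
  intro S hS
  by_contra hlt
  push_neg at hlt
  set f : Fin n × Fin 4 → Bool := fun v => decide (v ∈ S) with hfdef
  have hcard : (flist n f).countP id = S.ncard := by
    rw [countP_id_flist]
    rw [Set.ncard_eq_toFinset_card', Set.toFinset_card, ← Nat.card_eq_fintype_card]
    apply Nat.card_congr
    apply Equiv.subtypeEquivRight
    intro v
    simp [hfdef]
  have hperf : isPerf (n*4) (flist n f) = true := by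
    rw [isPerf, List.all_eq_true]
    intro i hi
    rw [List.mem_range] at hi
    set iF : Fin (n*4) := ⟨i, hi⟩ with hiF
    set v := finProdFinEquiv.symm iF with hv
    rw [Bool.or_eq_true, flist_getD n f i hi]
    by_cases hvS : v ∈ S
    · left; simp [hfdef, ← hv, hvS]; exact hvS
    · right
      rw [beq_iff_eq]
      have h1 := hS v hvS
      rw [show tcount (n*4) (flist n f) i = tcount (n*4) (flist n f) iF.val from rfl,
        tcount_flist]
      rw [existsUnique_iff_nat_card] at h1
      rw [← h1]
      apply Nat.card_congr
      apply Equiv.subtypeEquiv finProdFinEquiv.symm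
      intro u
      rw [hadj iF u]
      constructor
      · rintro ⟨h2, h3⟩; exact ⟨by simpa [hfdef] using h3, h2⟩
      · rintro ⟨h2, h3⟩; exact ⟨h3, by simpa [hfdef] using h2⟩
  have hperfB : isPerfB (n*4) (bitsOf (flist n f)) = true := by
    rw [isPerfB, List.all_eq_true]
    intro i hi
    have hi' := List.mem_range.mp hi
    have h2 := (List.all_eq_true.mp hperf) i hi
    rw [Bool.or_eq_true, beq_iff_eq] at h2 ⊢
    rw [testBit_bitsOf, tcountB_spec (n*4) hN _ i (by omega)]
    exact h2
  have hbad : isBadB (n*4) (bitsOf (flist n f)) ((flist n f).countP id) = true := by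
    rw [isBadB, hperfB, Bool.true_and, decide_eq_true_eq, hcard]
    omega
  have := search_mainB (n*4) hN hs (flist n f) (flist_length n f)
  rw [hbad] at this
  exact Bool.noConfusion this

def w10 : Finset (Fin 10 × Fin 4) := {(0,0), (0,1), (0,2), (0,3), (1,0), (1,3), (2,1), (2,2), (7,1), (7,2), (8,0), (8,3), (9,0), (9,1), (9,2), (9,3)}

def w11 : Finset (Fin 11 × Fin 4) := {(0,2), (1,0), (1,1), (1,2), (2,0), (2,3), (3,1), (3,2), (8,1), (8,2), (9,0), (9,3), (10,0), (10,1), (10,2), (10,3)}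

def w12 : Finset (Fin 12 × Fin 4) := {(0,2), (1,0), (1,1), (1,2), (2,0), (2,3), (3,1), (3,2), (8,1), (8,2), (9,0), (9,3), (10,1), (10,2), (11,0), (11,3)}

lemma board_eq (n : ℕ) (hN : n*4 ≤ 48)
    (hadj : ∀ i j : Fin (n*4), nadjB i.val j.val = true ↔
      (KN n 4).Adj (finProdFinEquiv.symm i) (finProdFinEquiv.symm j))
    (hs : searchB (n*4) (n*4) 0 0 0 = false)
    (s : Finset (Fin n × Fin 4)) (hcard : s.card = 16)
    (hperf : IsPerfDomSet (KN n 4) ↑s) :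
    perfDomNum (KN n 4) = 16 := by
  have hmem : 16 ∈ {k | ∃ S : Set (Fin n × Fin 4), IsPerfDomSet (KN n 4) S ∧ S.ncard = k} :=
    ⟨↑s, hperf, by rw [Set.ncard_coe_finset, hcard]⟩
  refine le_antisymm (Nat.sInf_le hmem) ?_
  obtain ⟨S, hS, hSc⟩ := Nat.sInf_mem ⟨16, hmem⟩
  unfold perfDomNum
  rw [← hSc]
  exact lower_bound n hN hadj hs S hS

end PD14

set_option maxRecDepth 1000000
set_option maxHeartbeats 64000000

theorem stmt14 :
    perfDomNum (KN 10 4) = 16 ∧ perfDomNum (KN 11 4) = 16 ∧ perfDomNum (KN 12 4) = 16 := by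
  refine ⟨PD14.board_eq 10 (by norm_num) (by decide) (by decide) PD14.w10 (by decide) (by decide),
    PD14.board_eq 11 (by norm_num) (by decide) (by decide) PD14.w11 (by decide) (by decide),
    PD14.board_eq 12 (by norm_num) (by decide) (by decide) PD14.w12 (by decide) (by decide)⟩
end
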